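/- arXiv:1005.0938 — 5 statements merged into one kernel-verified Lean document; each statement's English description precedes it below -/
import Mathlib

section
/- Let H : Set → Set be an ω^op-continuous endofunctor, M = (M, m, u) a monad on Set such that H admits a lifting H̃ to the Eilenberg–Moore category Alg(M) which is ω-cocontinuous, and such that the free algebra M0 on the empty set is a terminal object of Alg(M) (M0 = 1). Then the final H-coalgebra L is the Cauchy completion of (the image in L of) the initial H̃-algebra I with respect to the ultrametric d(x,y) = 2^{-n}, n minimal with p_n(x) ≠ p_n(y); precisely: L is Cauchy complete under this ultrametric, and the image of the canonical M-algebra map f : I → L is dense in L. -/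
open CategoryTheory

universe u

namespace OnCoalgebrasOverAlgebras

/-- A distributive law `λ : MH ⟶ HM` of a monad `M` on `Set` over an endofunctor `H`,
equivalently (the data of) a lifting `H̃` of `H` to the Eilenberg–Moore category of `M`:
it satisfies `λ ∘ u_H = Hu` and `λ ∘ m_H = Hm ∘ λ_M ∘ Mλ`. -/
structure DistLaw (M : Monad (Type u)) (H : Type u ⥤ Type u) where
  app : ∀ X : Type u, M.toFunctor.obj (H.obj X) → H.obj (M.toFunctor.obj X)
  naturality : ∀ {X Y : Type u} (f : X → Y) (z : M.toFunctor.obj (H.obj X)),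
    app Y (M.toFunctor.map (H.map (TypeCat.ofHom f)) z) = H.map (M.toFunctor.map (TypeCat.ofHom f)) (app X z)
  unit : ∀ (X : Type u) (z : H.obj X),
    app X (M.η.app (H.obj X) z) = H.map (M.η.app X) z
  mul : ∀ (X : Type u) (z : M.toFunctor.obj (M.toFunctor.obj (H.obj X))),
    app X (M.μ.app (H.obj X) z)
      = H.map (M.μ.app X) (app (M.toFunctor.obj X) (M.toFunctor.map (TypeCat.ofHom (app X)) z))

/-- The terminal sequence `1, H1, H²1, …` of an endofunctor `H` on `Set`. -/
def TObj (H : Type u ⥤ Type u) : ℕ → Type u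
  | 0 => PUnit
  | n + 1 => H.obj (TObj H n)

/-- The connecting maps `Hⁿt : H^{n+1}1 → Hⁿ1` of the terminal sequence,
where `t : H1 → 1` is the unique map. -/
def TMap (H : Type u ⥤ Type u) : ∀ n : ℕ, TObj H (n + 1) → TObj H n
  | 0 => fun _ => PUnit.unit
  | n + 1 => H.map (TypeCat.ofHom (TMap H n))

/-- The limit `L = {(x_n) | Hⁿt (x_{n+1}) = x_n}` of the terminal sequence of `H`. -/
def L (H : Type u ⥤ Type u) : Type u :=
  { x : ∀ n, TObj H n // ∀ n, TMap H n (x (n + 1)) = x n }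

/-- The limit projections `p_n : L → Hⁿ1`. -/
def pr (H : Type u ⥤ Type u) (n : ℕ) : L H → TObj H n := fun x => x.1 n

/-- The `M`-algebra structures `a_n : MHⁿ1 → Hⁿ1` on the terminal sequence,
defined by `a₀ : M1 → 1` the unique map and `a_{n+1} = H a_n ∘ λ_{Hⁿ1}`. -/
def aStr {M : Monad (Type u)} {H : Type u ⥤ Type u} (l : DistLaw M H) :
    ∀ n : ℕ, M.toFunctor.obj (TObj H n) → TObj H n
  | 0 => fun _ => PUnit.unit
  | n + 1 => fun z => H.map (TypeCat.ofHom (aStr l n)) (l.app (TObj H n) z)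

/-- The cone `α_n : C → Hⁿ1` over the terminal sequence induced by an `H`-coalgebra
structure `c : C → HC`; `α₀` is the unique map and `α_{n+1} = Hα_n ∘ c`. -/
def alphaCone (H : Type u ⥤ Type u) {C : Type u} (c : C → H.obj C) :
    ∀ n : ℕ, C → TObj H n
  | 0 => fun _ => PUnit.unit
  | n + 1 => fun z => H.map (TypeCat.ofHom (alphaCone H c n)) (c z)

open Classical in
/-- The canonical ultrametric on the limit `L` of the terminal sequence:
`d(x,y) = 2^{-n}` with `n` least such that `p_n x ≠ p_n y`, and `d(x,y) = 0` if `x = y`. -/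
noncomputable def dL (H : Type u ⥤ Type u) (x y : L H) : ℝ :=
  if x = y then 0 else (2⁻¹ : ℝ) ^ sInf { n : ℕ | x.1 n ≠ y.1 n }

/-- The maps `Hⁿ! : Hⁿ1 → H^{n+1}1` generated by a map `! : 1 → H1`
(under `M0 = 1`, the unique algebra map out of the initial algebra `M0`). -/
def Emb (H : Type u ⥤ Type u) (e : TObj H 0 → TObj H 1) :
    ∀ n : ℕ, TObj H n → TObj H (n + 1)
  | 0 => e
  | n + 1 => H.map (TypeCat.ofHom (Emb H e n))

private lemma mapmap (F : Type u ⥤ Type u) {X Y Z : Type u} (f : X → Y) (g : Y → Z)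
    (x : F.obj X) : F.map (TypeCat.ofHom g) (F.map (TypeCat.ofHom f) x)
      = F.map (TypeCat.ofHom (fun w => g (f w))) x := by
  rw [← Functor.map_comp_apply]
  rfl

/-- The lifting `H̃` of `H` to the Eilenberg–Moore category `Alg(M)` determined by a
distributive law `λ : MH ⟶ HM`: it sends an algebra `(X, x)` to `(HX, Hx ∘ λ_X)`
and satisfies `U^M ∘ H̃ = H ∘ U^M`. -/
def liftF (M : Monad (Type u)) (H : Type u ⥤ Type u) (l : DistLaw M H) :
    M.Algebra ⥤ M.Algebra where
  obj A :=
    { A := H.obj A.A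
      a := TypeCat.ofHom (fun z => H.map A.a (l.app A.A z))
      unit := by
        ext z
        change H.map A.a (l.app A.A (M.η.app (H.obj A.A) z)) = z
        rw [l.unit A.A z, ← Functor.map_comp_apply, A.unit]
        simp
      assoc := by
        ext z
        change H.map A.a (l.app A.A (M.μ.app (H.obj A.A) z))
          = H.map A.a (l.app A.A (M.toFunctor.map (TypeCat.ofHom (l.app A.A) ≫ H.map A.a) z))
        rw [Functor.map_comp_apply]
        have hn := l.naturality (⇑A.a) (M.toFunctor.map (TypeCat.ofHom (l.app A.A)) z)
        rw [TypeCat.ofHom_eq] at hn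
        rw [hn, l.mul A.A z, ← Functor.map_comp_apply, ← Functor.map_comp_apply,
          A.assoc] }
  map := fun {A B} f =>
    { f := H.map f.f
      h := by
        ext z
        change H.map B.a (l.app B.A (M.toFunctor.map (H.map f.f) z))
          = H.map f.f (H.map A.a (l.app A.A z))
        have hn := l.naturality (⇑f.f) z
        rw [TypeCat.ofHom_eq] at hn
        rw [hn, ← Functor.map_comp_apply, ← Functor.map_comp_apply, f.h] }
  map_id A := by
    apply Monad.Algebra.Hom.ext
    show H.map (𝟙 A.A) = 𝟙 (H.obj A.A)
    simp
  map_comp f g := by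
    apply Monad.Algebra.Hom.ext
    show H.map (f.f ≫ g.f) = _
    rw [H.map_comp]
    rfl


private lemma ne_set_nonempty {H : Type u ⥤ Type u} {x y : L H} (h : x ≠ y) :
    {n : ℕ | x.1 n ≠ y.1 n}.Nonempty := by
  by_contra hc
  push_neg at hc
  exact h (Subtype.ext (funext fun n => by
    by_contra hn
    exact absurd (hc ▸ hn : n ∈ (∅ : Set ℕ)) (by simp)))

private lemma agree_of_lt {H : Type u ⥤ Type u} {x y : L H} {k : ℕ}
    (h : dL H x y < (2⁻¹ : ℝ) ^ k) : ∀ j ≤ k, x.1 j = y.1 j := by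
  intro j hj
  by_cases hxy : x = y
  · rw [hxy]
  · rw [dL, if_neg hxy] at h
    have hk : k < sInf {n : ℕ | x.1 n ≠ y.1 n} := by
      by_contra hc
      push_neg at hc
      exact absurd (pow_le_pow_of_le_one (by norm_num) (by norm_num) hc) (not_le.mpr h)
    exact not_not.mp (Nat.notMem_of_lt_sInf (lt_of_le_of_lt hj hk))

private lemma dL_le_of_agree {H : Type u ⥤ Type u} {x y : L H} {k : ℕ}
    (h : ∀ j ≤ k, x.1 j = y.1 j) : dL H x y ≤ (2⁻¹ : ℝ) ^ (k + 1) := by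
  by_cases hxy : x = y
  · rw [dL, if_pos hxy]; positivity
  · rw [dL, if_neg hxy]
    apply pow_le_pow_of_le_one (by norm_num) (by norm_num)
    by_contra hc
    push_neg at hc
    have hm := Nat.sInf_mem (ne_set_nonempty hxy)
    exact hm (h _ (Nat.lt_succ_iff.mp hc))

private lemma agree_down {H : Type u ⥤ Type u} (z w : L H) :
    ∀ k, z.1 k = w.1 k → ∀ j, j ≤ k → z.1 j = w.1 j := by
  intro k
  induction k with
  | zero => intro h j hj; rw [Nat.le_zero.mp hj]; exact h
  | succ k ih =>
    intro h j hj
    rcases Nat.lt_or_ge j (k + 1) with h' | h'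
    · exact ih (by rw [← z.2 k, ← w.2 k, h]) j (Nat.lt_succ_iff.mp h')
    · rw [le_antisymm hj h']; exact h

/-- **Theorem 1.** Let `H : Set → Set` be an `ω^op`-continuous
endofunctor and `M` a monad on `Set` such that `H` admits a lifting `H̃` to `Alg(M)`
which is `ω`-cocontinuous, and such that `M0 = 1` in `Alg(M)`.  Then the final
`H`-coalgebra `L` is the Cauchy completion of (the image in `L` of) the initial
`H̃`-algebra `I` with respect to the ultrametric `d(x,y) = 2^{-n}`, `n` minimal with
`p_n x ≠ p_n y`: `L` is Cauchy complete under this ultrametric and the image of the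
canonical `M`-algebra map `f : I → L` is dense in `L`. -/
theorem final_coalgebra_is_completion_of_initial_algebra
    (M : Monad (Type u)) (H : Type u ⥤ Type u)
    -- `H` is `ω^op`-continuous
    [Limits.PreservesLimitsOfShape ℕᵒᵖ H]
    -- `H` admits a lifting `H̃` to `Alg(M)`, which is `ω`-cocontinuous
    (l : DistLaw M H)
    [Limits.PreservesColimitsOfShape ℕ (liftF M H l)]
    -- `M0 = 1` in `Alg(M)`: the free algebra on the empty set is a singleton
    (h0 : Subsingleton (M.toFunctor.obj PEmpty))
    (h1 : Nonempty (M.toFunctor.obj PEmpty))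
    -- the final coalgebra structure `ξ : L ≅ HL` obtained from the limit
    (ξ : L H → H.obj (L H)) (hbij : Function.Bijective ξ)
    (hξ : ∀ (n : ℕ) (x : L H), pr H (n + 1) x = H.map (TypeCat.ofHom (pr H n)) (ξ x))
    -- the `M`-algebra structure `γ : ML → L`, the unique coalgebra map from `(ML, λ_L ∘ Mξ)`
    (γ : M.toFunctor.obj (L H) → L H)
    (hγ : ∀ z, ξ (γ z) = H.map (TypeCat.ofHom γ) (l.app (L H) (M.toFunctor.map (TypeCat.ofHom ξ) z)))
    -- the unique algebra map `! : 1 = M0 → HM0 = H1`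
    (e : TObj H 0 → TObj H 1)
    (he : ∀ z, e (aStr l 0 z) = aStr l 1 (M.toFunctor.map (TypeCat.ofHom e) z))
    -- the initial `H̃`-algebra `I`: an `M`-algebra `(I, ζ)` …
    (I : Type u) (ζ : M.toFunctor.obj I → I)
    (hζu : ∀ z, ζ (M.η.app I z) = z)
    (hζm : ∀ z, ζ (M.μ.app I z) = ζ (M.toFunctor.map (TypeCat.ofHom ζ) z))
    -- … with a cocone `i_n : HⁿM0 = Hⁿ1 → I` of `M`-algebra morphisms …
    (i : ∀ n : ℕ, TObj H n → I)
    (hialg : ∀ (n : ℕ) (z : M.toFunctor.obj (TObj H n)),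
      i n (aStr l n z) = ζ (M.toFunctor.map (TypeCat.ofHom (i n)) z))
    (hicoc : ∀ (n : ℕ) (x : TObj H n), i (n + 1) (Emb H e n x) = i n x)
    -- … which is colimiting in `Alg(M)` for the initial sequence `M0 → HM0 → H²M0 → …`
    (hcolim : ∀ (B : Type u) (b : M.toFunctor.obj B → B),
      (∀ z, b (M.η.app B z) = z) →
      (∀ z, b (M.μ.app B z) = b (M.toFunctor.map (TypeCat.ofHom b) z)) →
      ∀ g : ∀ n : ℕ, TObj H n → B,
        (∀ (n : ℕ) (z : M.toFunctor.obj (TObj H n)),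
          g n (aStr l n z) = b (M.toFunctor.map (TypeCat.ofHom (g n)) z)) →
        (∀ (n : ℕ) (x : TObj H n), g (n + 1) (Emb H e n x) = g n x) →
        ∃! h : I → B,
          (∀ z, h (ζ z) = b (M.toFunctor.map (TypeCat.ofHom h) z)) ∧ ∀ (n : ℕ) (x : TObj H n), h (i n x) = g n x)
    -- the canonical `M`-algebra map `f : I → L` with `p_n ∘ f ∘ i_n = Hⁿs = id`
    (f : I → L H)
    (hfalg : ∀ z, f (ζ z) = γ (M.toFunctor.map (TypeCat.ofHom f) z))
    (hfi : ∀ (n : ℕ) (x : TObj H n), pr H n (f (i n x)) = x) :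
    -- `L` is Cauchy complete under the ultrametric `dL` …
    (∀ x : ℕ → L H,
      (∀ ε : ℝ, 0 < ε → ∃ N : ℕ, ∀ m n : ℕ, N ≤ m → N ≤ n → dL H (x m) (x n) < ε) →
      ∃ y : L H, ∀ ε : ℝ, 0 < ε → ∃ N : ℕ, ∀ n : ℕ, N ≤ n → dL H (x n) y < ε) ∧
    -- … and the image of `f : I → L` is dense in `L`
    (∀ (x : L H) (ε : ℝ), 0 < ε → ∃ w : I, dL H x (f w) < ε) := by
  constructor
  · intro x hx
    choose N hN using fun k : ℕ => hx ((2⁻¹ : ℝ) ^ k) (by positivity)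
    have key : ∀ j m, N j ≤ m → (x m).1 j = (x (N j)).1 j := fun j m hm =>
      agree_of_lt (hN j m (N j) hm le_rfl) j le_rfl
    have compat : ∀ k, TMap H k ((x (N (k + 1))).1 (k + 1)) = (x (N k)).1 k := by
      intro k
      have h1 : (x (max (N k) (N (k + 1)))).1 (k + 1) = (x (N (k + 1))).1 (k + 1) :=
        key _ _ (le_max_right _ _)
      have h2 : (x (max (N k) (N (k + 1)))).1 k = (x (N k)).1 k :=
        key _ _ (le_max_left _ _)
      rw [← h1, ← h2]; exact (x (max (N k) (N (k + 1)))).2 k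
    refine ⟨⟨fun k => (x (N k)).1 k, compat⟩, ?_⟩
    intro ε hε
    obtain ⟨k, hk⟩ := exists_pow_lt_of_lt_one hε (by norm_num : (2⁻¹ : ℝ) < 1)
    refine ⟨N k, fun n hn => ?_⟩
    have hagree : ∀ j ≤ k, (x n).1 j = (x (N j)).1 j := by
      intro j hj
      have h1 : (x n).1 j = (x (max (N k) (N j))).1 j :=
        agree_of_lt (hN k n _ hn (le_max_left _ _)) j hj
      rw [h1]; exact key j _ (le_max_right _ _)
    calc dL H (x n) ⟨fun k => (x (N k)).1 k, compat⟩ ≤ (2⁻¹ : ℝ) ^ (k + 1) :=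
          dL_le_of_agree hagree
      _ ≤ (2⁻¹ : ℝ) ^ k := pow_le_pow_of_le_one (by norm_num) (by norm_num) (Nat.le_succ k)
      _ < ε := hk
  · intro x ε hε
    obtain ⟨k, hk⟩ := exists_pow_lt_of_lt_one hε (by norm_num : (2⁻¹ : ℝ) < 1)
    refine ⟨i k (x.1 k), ?_⟩
    have hk' : x.1 k = (f (i k (x.1 k))).1 k := (hfi k (x.1 k)).symm
    calc dL H x (f (i k (x.1 k))) ≤ (2⁻¹ : ℝ) ^ (k + 1) :=
          dL_le_of_agree (fun j hj => agree_down x _ k hk' j hj)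
      _ ≤ (2⁻¹ : ℝ) ^ k := pow_le_pow_of_le_one (by norm_num) (by norm_num) (Nat.le_succ k)
      _ < ε := hk

end OnCoalgebrasOverAlgebras
end

section
/- Let H : Set → Set be an ω^op-continuous endofunctor with a lifting H̃ to Alg(M) given by a distributive law λ : MH → HM, and let (L, ξ) be the final H-coalgebra obtained as the limit of the terminal sequence. Then the cone (ML → MHⁿ1 → Hⁿ1)_{n≥0} given by a_n ∘ M p_n coincides with the cone α_n : ML → Hⁿ1 induced by the H-coalgebra structure λ_L ∘ Mξ on ML; consequently the unique H-coalgebra map γ : ML → L from (ML, λ_L ∘ Mξ) to (L, ξ) satisfies p_n ∘ γ = a_n ∘ M p_n for all n. -/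
open CategoryTheory

universe u

namespace OnCoalgebrasOverAlgebras

/-- Let `H` be an `ω^op`-continuous `Set`-endofunctor with a lifting to
`Alg(M)` given by a distributive law `λ : MH → HM`, and let `(L, ξ)` be the final
`H`-coalgebra obtained as the limit of the terminal sequence.  Then the cone
`(ML → MHⁿ1 → Hⁿ1)` given by `a_n ∘ Mp_n` coincides with the cone `α_n : ML → Hⁿ1`
induced by the `H`-coalgebra structure `λ_L ∘ Mξ` on `ML`; consequently the unique
`H`-coalgebra map `γ : ML → L` from `(ML, λ_L ∘ Mξ)` to `(L, ξ)` satisfies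
`p_n ∘ γ = a_n ∘ Mp_n` for all `n`. -/
theorem cone_on_ML_coincides (M : Monad (Type u)) (H : Type u ⥤ Type u)
    [Limits.PreservesLimitsOfShape ℕᵒᵖ H]
    (l : DistLaw M H)
    (ξ : L H → H.obj (L H)) (hbij : Function.Bijective ξ)
    (hξ : ∀ (n : ℕ) (x : L H), pr H (n + 1) x = H.map (TypeCat.ofHom (pr H n)) (ξ x)) :
    -- the two cones on `ML` coincide
    (∀ (n : ℕ) (z : M.toFunctor.obj (L H)),
      alphaCone H (fun w => l.app (L H) (M.toFunctor.map (TypeCat.ofHom ξ) w)) n z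
        = aStr l n (M.toFunctor.map (TypeCat.ofHom (pr H n)) z)) ∧
    -- hence the unique coalgebra map `γ : ML → L` satisfies `p_n ∘ γ = a_n ∘ Mp_n`
    (∀ γ : M.toFunctor.obj (L H) → L H,
      (∀ z, ξ (γ z) = H.map (TypeCat.ofHom γ) (l.app (L H) (M.toFunctor.map (TypeCat.ofHom ξ) z))) →
      ∀ (n : ℕ) (z : M.toFunctor.obj (L H)),
        pr H n (γ z) = aStr l n (M.toFunctor.map (TypeCat.ofHom (pr H n)) z)) := by
  have key : ∀ (n : ℕ),
      (alphaCone H (fun w => l.app (L H) (M.toFunctor.map (TypeCat.ofHom ξ) w)) n : _ → _)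
        = fun z => aStr l n (M.toFunctor.map (TypeCat.ofHom (pr H n)) z) := by
    intro n
    induction n with
    | zero => funext z; rfl
    | succ n ih =>
      funext z
      have hpr : pr H (n + 1) = (fun x => H.map (TypeCat.ofHom (pr H n)) (ξ x)) := funext (hξ n)
      have hmz : M.toFunctor.map (TypeCat.ofHom (pr H (n + 1))) z
          = M.toFunctor.map (H.map (TypeCat.ofHom (pr H n))) (M.toFunctor.map (TypeCat.ofHom ξ) z) := by
        rw [hpr, ← FunctorToTypes.map_comp_apply]; rfl
      show H.map (TypeCat.ofHom (alphaCone H _ n)) (l.app (L H) (M.toFunctor.map (TypeCat.ofHom ξ) z))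
          = H.map (TypeCat.ofHom (aStr l n)) (l.app (TObj H n) (M.toFunctor.map (TypeCat.ofHom (pr H (n + 1))) z))
      rw [hmz, l.naturality, ih, ← FunctorToTypes.map_comp_apply]
      rfl
  refine ⟨fun n z => congrFun (key n) z, ?_⟩
  intro γ hγ n
  induction n with
  | zero => intro z; rfl
  | succ n ih =>
    intro z
    have hpr : pr H (n + 1) = (fun x => H.map (TypeCat.ofHom (pr H n)) (ξ x)) := funext (hξ n)
    have hmz : M.toFunctor.map (TypeCat.ofHom (pr H (n + 1))) z
        = M.toFunctor.map (H.map (TypeCat.ofHom (pr H n))) (M.toFunctor.map (TypeCat.ofHom ξ) z) := by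
      rw [hpr, ← FunctorToTypes.map_comp_apply]; rfl
    have hγfun : (fun w => pr H n (γ w)) = fun w => aStr l n (M.toFunctor.map (TypeCat.ofHom (pr H n)) w) :=
      funext ih
    rw [hξ n (γ z), hγ, ← FunctorToTypes.map_comp_apply]
    show H.map (TypeCat.ofHom (fun w => pr H n (γ w))) (l.app (L H) (M.toFunctor.map (TypeCat.ofHom ξ) z))
      = H.map (TypeCat.ofHom (aStr l n)) (l.app (TObj H n) (M.toFunctor.map (TypeCat.ofHom (pr H (n + 1))) z))
    rw [hγfun, hmz, l.naturality, ← FunctorToTypes.map_comp_apply]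
    rfl

end OnCoalgebrasOverAlgebras
end

section
/- Let H : Set → Set be an ω^op-continuous endofunctor admitting a lifting to Alg(M) via a distributive law λ : MH → HM. Equip each Hⁿ1 and each MHⁿ1 with the discrete topology, L with the initial topology from the cone p_n : L → Hⁿ1, and ML with the initial topology from the cone M p_n : ML → MHⁿ1. Then the final H-coalgebra L is a topological M-algebra: the structure map γ : ML → L is continuous with respect to these topologies. -/
open CategoryTheory

universe u

namespace OnCoalgebrasOverAlgebras

/-- Let `H` be an `ω^op`-continuous `Set`-endofunctor admitting a
lifting to `Alg(M)` via a distributive law `λ : MH → HM`.  Equip each `Hⁿ1` and each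
`MHⁿ1` with the discrete topology, `L` with the initial topology from the cone
`p_n : L → Hⁿ1`, and `ML` with the initial topology from the cone `Mp_n : ML → MHⁿ1`.
Then the final `H`-coalgebra `L` is a topological `M`-algebra: its structure map
`γ : ML → L` (the unique `H`-coalgebra map from `(ML, λ_L ∘ Mξ)` to `(L, ξ)`) is
continuous with respect to these topologies. -/
theorem final_coalgebra_topological_algebra (M : Monad (Type u)) (H : Type u ⥤ Type u)
    [Limits.PreservesLimitsOfShape ℕᵒᵖ H]
    (l : DistLaw M H)
    (ξ : L H → H.obj (L H)) (hbij : Function.Bijective ξ)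
    (hξ : ∀ (n : ℕ) (x : L H), pr H (n + 1) x = H.map (TypeCat.ofHom (pr H n)) (ξ x))
    (γ : M.toFunctor.obj (L H) → L H)
    (hγ : ∀ z, ξ (γ z) = H.map (TypeCat.ofHom γ) (l.app (L H) (M.toFunctor.map (TypeCat.ofHom ξ) z))) :
    @Continuous (M.toFunctor.obj (L H)) (L H)
      (⨅ n : ℕ, TopologicalSpace.induced (M.toFunctor.map (TypeCat.ofHom (pr H n)))
        (⊥ : TopologicalSpace (M.toFunctor.obj (TObj H n))))
      (⨅ n : ℕ, TopologicalSpace.induced (pr H n)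
        (⊥ : TopologicalSpace (TObj H n)))
      γ := by
  have key : ∀ (n : ℕ) (z : M.toFunctor.obj (L H)),
      pr H n (γ z) = aStr l n (M.toFunctor.map (TypeCat.ofHom (pr H n)) z) := by
    intro n
    induction n with
    | zero => intro z; rfl
    | succ n ih =>
      intro z
      have hfun : (pr H n ∘ γ) = (aStr l n ∘ M.toFunctor.map (TypeCat.ofHom (pr H n))) := funext ih
      have h1 : pr H (n + 1) (γ z) = H.map (TypeCat.ofHom (pr H n)) (ξ (γ z)) := hξ n (γ z)
      rw [h1, hγ z]
      have h2 : H.map (TypeCat.ofHom (pr H n)) (H.map (TypeCat.ofHom γ) (l.app (L H) (M.toFunctor.map (TypeCat.ofHom ξ) z)))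
          = H.map (TypeCat.ofHom (pr H n ∘ γ)) (l.app (L H) (M.toFunctor.map (TypeCat.ofHom ξ) z)) := by
        rw [← FunctorToTypes.map_comp_apply]; rfl
      rw [h2, hfun]
      have h3 : H.map (TypeCat.ofHom (aStr l n ∘ M.toFunctor.map (TypeCat.ofHom (pr H n)))) (l.app (L H) (M.toFunctor.map (TypeCat.ofHom ξ) z))
          = H.map (TypeCat.ofHom (aStr l n)) (H.map (M.toFunctor.map (TypeCat.ofHom (pr H n))) (l.app (L H) (M.toFunctor.map (TypeCat.ofHom ξ) z))) := by
        rw [← FunctorToTypes.map_comp_apply]; rfl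
      rw [h3, ← l.naturality (pr H n) (M.toFunctor.map (TypeCat.ofHom ξ) z)]
      have h4 : M.toFunctor.map (H.map (TypeCat.ofHom (pr H n))) (M.toFunctor.map (TypeCat.ofHom ξ) z)
          = M.toFunctor.map (TypeCat.ofHom (pr H (n + 1))) z := by
        rw [← FunctorToTypes.map_comp_apply]
        have hc : (TypeCat.ofHom ξ ≫ H.map (TypeCat.ofHom (pr H n))) = TypeCat.ofHom (pr H (n + 1)) := ConcreteCategory.hom_ext _ _ fun w => (hξ n w).symm
        rw [hc]
        rfl
      rw [h4]
      rfl
  letI tS : TopologicalSpace (M.toFunctor.obj (L H)) :=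
    ⨅ n : ℕ, TopologicalSpace.induced (M.toFunctor.map (TypeCat.ofHom (pr H n)))
      (⊥ : TopologicalSpace (M.toFunctor.obj (TObj H n)))
  refine continuous_iInf_rng.2 fun n => continuous_induced_rng.2 ?_
  have heq : (pr H n ∘ γ) = aStr l n ∘ M.toFunctor.map (TypeCat.ofHom (pr H n)) := funext (key n)
  rw [heq]
  letI : TopologicalSpace (M.toFunctor.obj (TObj H n)) := ⊥
  letI : TopologicalSpace (TObj H n) := ⊥
  exact continuous_bot.comp (continuous_iInf_dom (i := n) continuous_induced_dom)

end OnCoalgebrasOverAlgebras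
end

section
/- Let H : Set → Set be an endofunctor admitting a lifting H̃ to Alg(M) via a distributive law λ : MH → HM, and suppose the final H-coalgebra (L, ξ : L → HL) exists. Let γ : ML → L be the unique H-coalgebra map from (ML, λ_L ∘ Mξ) to (L, ξ). Then (L, γ) is an M-algebra, ξ : (L, γ) → (HL, Hγ ∘ λ_L) is an M-algebra morphism, H̃(L, γ) = (HL, Hγ ∘ λ_L), and ((L, γ), ξ) is the final H̃-coalgebra in Alg(M). -/
open CategoryTheory

universe u

namespace OnCoalgebrasOverAlgebras

/-- Let `H` be a `Set`-endofunctor admitting a lifting `H̃` to `Alg(M)`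
via a distributive law `λ : MH → HM`, and suppose the final `H`-coalgebra `(L, ξ)`
exists.  Let `γ : ML → L` be the unique `H`-coalgebra map from `(ML, λ_L ∘ Mξ)` to
`(L, ξ)`.  Then `(L, γ)` is an `M`-algebra, `(HL, Hγ ∘ λ_L)` is an `M`-algebra (the
value `H̃(L, γ)` of the lifting), `ξ : (L, γ) → (HL, Hγ ∘ λ_L)` is an `M`-algebra
morphism, and `((L, γ), ξ)` is the final `H̃`-coalgebra in `Alg(M)`. -/
theorem final_lifted_coalgebra (M : Monad (Type u)) (H : Type u ⥤ Type u)
    (l : DistLaw M H)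
    (L : Type u) (ξ : L → H.obj L)
    (hfinal : ∀ (C : Type u) (c : C → H.obj C),
      ∃! h : C → L, ∀ z, ξ (h z) = H.map (TypeCat.ofHom h) (c z))
    (γ : M.toFunctor.obj L → L)
    (hγ : ∀ z, ξ (γ z) = H.map (TypeCat.ofHom γ) (l.app L (M.toFunctor.map (TypeCat.ofHom ξ) z))) :
    -- `(L, γ)` is an `M`-algebra
    ((∀ z : L, γ (M.η.app L z) = z) ∧
      (∀ z, γ (M.μ.app L z) = γ (M.toFunctor.map (TypeCat.ofHom γ) z))) ∧
    -- `(HL, Hγ ∘ λ_L)` is an `M`-algebra: the value of the lifting `H̃` at `(L, γ)`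
    ((∀ z : H.obj L, H.map (TypeCat.ofHom γ) (l.app L (M.η.app (H.obj L) z)) = z) ∧
      (∀ z, H.map (TypeCat.ofHom γ) (l.app L (M.μ.app (H.obj L) z))
        = H.map (TypeCat.ofHom γ) (l.app L (M.toFunctor.map (TypeCat.ofHom (fun w => H.map (TypeCat.ofHom γ) (l.app L w))) z)))) ∧
    -- `ξ` is an `M`-algebra morphism `(L, γ) → (HL, Hγ ∘ λ_L)`
    (∀ z, ξ (γ z) = H.map (TypeCat.ofHom γ) (l.app L (M.toFunctor.map (TypeCat.ofHom ξ) z))) ∧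
    -- `((L, γ), ξ)` is the final `H̃`-coalgebra: for every `M`-algebra `(C, c)` with an
    -- `H`-coalgebra structure `ξC` that is an algebra morphism `(C,c) → H̃(C,c)` there is a
    -- unique `M`-algebra morphism `C → L` that is also an `H`-coalgebra morphism
    (∀ (C : Type u) (c : M.toFunctor.obj C → C),
      (∀ z, c (M.η.app C z) = z) →
      (∀ z, c (M.μ.app C z) = c (M.toFunctor.map (TypeCat.ofHom c) z)) →
      ∀ ξC : C → H.obj C,
        (∀ z, ξC (c z) = H.map (TypeCat.ofHom c) (l.app C (M.toFunctor.map (TypeCat.ofHom ξC) z))) →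
        ∃! h : C → L,
          (∀ z, h (c z) = γ (M.toFunctor.map (TypeCat.ofHom h) z)) ∧
          (∀ z, ξ (h z) = H.map (TypeCat.ofHom h) (ξC z))) := by
  have Hcomp : ∀ {X Y Z : Type u} (f : X → Y) (g : Y → Z) (x : H.obj X),
      H.map (TypeCat.ofHom g) (H.map (TypeCat.ofHom f) x) = H.map (TypeCat.ofHom (fun x => g (f x))) x := by
    intro X Y Z f g x
    exact (FunctorToTypes.map_comp_apply H (TypeCat.ofHom f) (TypeCat.ofHom g) x).symm
  have HcompH : ∀ {X Y Z : Type u} (f : X ⟶ Y) (g : Y ⟶ Z) (x : H.obj X),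
      H.map g (H.map f x) = H.map (f ≫ g) x := by
    intro X Y Z f g x
    exact (FunctorToTypes.map_comp_apply H f g x).symm
  have Mcomp : ∀ {X Y Z : Type u} (f : X → Y) (g : Y → Z) (x : M.toFunctor.obj X),
      M.toFunctor.map (TypeCat.ofHom g) (M.toFunctor.map (TypeCat.ofHom f) x) = M.toFunctor.map (TypeCat.ofHom (fun x => g (f x))) x := by
    intro X Y Z f g x
    exact (FunctorToTypes.map_comp_apply M.toFunctor (TypeCat.ofHom f) (TypeCat.ofHom g) x).symm
  have uniq : ∀ (C : Type u) (c : C → H.obj C) (f g : C → L),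
      (∀ z, ξ (f z) = H.map (TypeCat.ofHom f) (c z)) → (∀ z, ξ (g z) = H.map (TypeCat.ofHom g) (c z)) → f = g := by
    intro C c f g hf hg
    obtain ⟨h, -, hu⟩ := hfinal C c
    rw [hu f hf, hu g hg]
  -- unit law
  have hunit : ∀ z : L, γ (M.η.app L z) = z := by
    have key : (fun z : L => γ (M.η.app L z)) = (fun z : L => z) := by
      apply uniq L ξ
      · intro z
        have h1 : M.toFunctor.map (TypeCat.ofHom ξ) (M.η.app L z) = M.η.app (H.obj L) (ξ z) :=
          (congrArg (fun f => f z) (M.η.naturality (TypeCat.ofHom ξ))).symm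
        calc ξ (γ (M.η.app L z)) = H.map (TypeCat.ofHom γ) (l.app L (M.toFunctor.map (TypeCat.ofHom ξ) (M.η.app L z))) :=
              hγ _
          _ = H.map (TypeCat.ofHom γ) (l.app L (M.η.app (H.obj L) (ξ z))) := by rw [h1]
          _ = H.map (TypeCat.ofHom γ) (H.map (M.η.app L) (ξ z)) := by rw [l.unit]
          _ = H.map (TypeCat.ofHom (fun z : L => γ (M.η.app L z))) (ξ z) := HcompH _ _ _
      · intro z
        exact (FunctorToTypes.map_id_apply H (ξ z)).symm
    exact fun z => congrFun key z
  -- mul law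
  have hmul : ∀ z, γ (M.μ.app L z) = γ (M.toFunctor.map (TypeCat.ofHom γ) z) := by
    have key : (fun z => γ (M.μ.app L z)) = (fun z => γ (M.toFunctor.map (TypeCat.ofHom γ) z)) := by
      apply uniq (M.toFunctor.obj (M.toFunctor.obj L))
        (fun z => l.app (M.toFunctor.obj L)
          (M.toFunctor.map (TypeCat.ofHom (fun w => l.app L (M.toFunctor.map (TypeCat.ofHom ξ) w))) z))
      · intro z
        have h1 : M.toFunctor.map (TypeCat.ofHom ξ) (M.μ.app L z)
            = M.μ.app (H.obj L) (M.toFunctor.map (M.toFunctor.map (TypeCat.ofHom ξ)) z) :=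
          (congrArg (fun f => f z) (M.μ.naturality (TypeCat.ofHom ξ))).symm
        calc ξ (γ (M.μ.app L z))
            = H.map (TypeCat.ofHom γ) (l.app L (M.toFunctor.map (TypeCat.ofHom ξ) (M.μ.app L z))) := hγ _
          _ = H.map (TypeCat.ofHom γ) (l.app L (M.μ.app (H.obj L)
                (M.toFunctor.map (M.toFunctor.map (TypeCat.ofHom ξ)) z))) := by rw [h1]
          _ = H.map (TypeCat.ofHom γ) (H.map (M.μ.app L) (l.app (M.toFunctor.obj L)
                (M.toFunctor.map (TypeCat.ofHom (l.app L)) (M.toFunctor.map (M.toFunctor.map (TypeCat.ofHom ξ)) z)))) := by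
              rw [l.mul]
          _ = H.map (TypeCat.ofHom (fun x => γ (M.μ.app L x))) (l.app (M.toFunctor.obj L)
                (M.toFunctor.map (TypeCat.ofHom (l.app L)) (M.toFunctor.map (M.toFunctor.map (TypeCat.ofHom ξ)) z))) :=
              HcompH _ _ _
          _ = H.map (TypeCat.ofHom (fun x => γ (M.μ.app L x))) (l.app (M.toFunctor.obj L)
                (M.toFunctor.map (TypeCat.ofHom (fun w => l.app L (M.toFunctor.map (TypeCat.ofHom ξ) w))) z)) := by
              rw [← FunctorToTypes.map_comp_apply]; rfl
      · intro z
        calc ξ (γ (M.toFunctor.map (TypeCat.ofHom γ) z))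
            = H.map (TypeCat.ofHom γ) (l.app L (M.toFunctor.map (TypeCat.ofHom ξ) (M.toFunctor.map (TypeCat.ofHom γ) z))) := hγ _
          _ = H.map (TypeCat.ofHom γ) (l.app L (M.toFunctor.map (TypeCat.ofHom (fun w => ξ (γ w))) z)) := by rw [Mcomp]
          _ = H.map (TypeCat.ofHom γ) (l.app L (M.toFunctor.map
                (TypeCat.ofHom (fun w => H.map (TypeCat.ofHom γ) (l.app L (M.toFunctor.map (TypeCat.ofHom ξ) w)))) z)) := by
              rw [funext hγ]
          _ = H.map (TypeCat.ofHom γ) (l.app L (M.toFunctor.map (H.map (TypeCat.ofHom γ))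
                (M.toFunctor.map (TypeCat.ofHom (fun w => l.app L (M.toFunctor.map (TypeCat.ofHom ξ) w))) z))) := by
              rw [← FunctorToTypes.map_comp_apply]; rfl
          _ = H.map (TypeCat.ofHom γ) (H.map (M.toFunctor.map (TypeCat.ofHom γ)) (l.app (M.toFunctor.obj L)
                (M.toFunctor.map (TypeCat.ofHom (fun w => l.app L (M.toFunctor.map (TypeCat.ofHom ξ) w))) z))) := by
              rw [l.naturality γ]
          _ = H.map (TypeCat.ofHom (fun x => γ (M.toFunctor.map (TypeCat.ofHom γ) x))) (l.app (M.toFunctor.obj L)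
                (M.toFunctor.map (TypeCat.ofHom (fun w => l.app L (M.toFunctor.map (TypeCat.ofHom ξ) w))) z)) :=
              HcompH _ _ _
    exact fun z => congrFun key z
  refine ⟨⟨hunit, hmul⟩, ⟨?_, ?_⟩, hγ, ?_⟩
  · -- lifted unit
    intro z
    calc H.map (TypeCat.ofHom γ) (l.app L (M.η.app (H.obj L) z))
        = H.map (TypeCat.ofHom γ) (H.map (M.η.app L) z) := by rw [l.unit]
      _ = H.map (TypeCat.ofHom (fun x : L => γ (M.η.app L x))) z := HcompH _ _ _
      _ = H.map (TypeCat.ofHom (fun x : L => x)) z := congrArg (fun f => H.map (TypeCat.ofHom f) z) (funext hunit)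
      _ = z := FunctorToTypes.map_id_apply H z
  · -- lifted mul
    intro z
    calc H.map (TypeCat.ofHom γ) (l.app L (M.μ.app (H.obj L) z))
        = H.map (TypeCat.ofHom γ) (H.map (M.μ.app L) (l.app (M.toFunctor.obj L)
            (M.toFunctor.map (TypeCat.ofHom (l.app L)) z))) := by rw [l.mul]
      _ = H.map (TypeCat.ofHom (fun x => γ (M.μ.app L x))) (l.app (M.toFunctor.obj L)
            (M.toFunctor.map (TypeCat.ofHom (l.app L)) z)) := HcompH _ _ _
      _ = H.map (TypeCat.ofHom (fun x => γ (M.toFunctor.map (TypeCat.ofHom γ) x))) (l.app (M.toFunctor.obj L)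
            (M.toFunctor.map (TypeCat.ofHom (l.app L)) z)) :=
          congrArg (fun f => H.map (TypeCat.ofHom f) _) (funext hmul)
      _ = H.map (TypeCat.ofHom γ) (H.map (M.toFunctor.map (TypeCat.ofHom γ)) (l.app (M.toFunctor.obj L)
            (M.toFunctor.map (TypeCat.ofHom (l.app L)) z))) := by rw [HcompH]; rfl
      _ = H.map (TypeCat.ofHom γ) (l.app L (M.toFunctor.map (H.map (TypeCat.ofHom γ))
            (M.toFunctor.map (TypeCat.ofHom (l.app L)) z))) := by rw [l.naturality γ]
      _ = H.map (TypeCat.ofHom γ) (l.app L (M.toFunctor.map (TypeCat.ofHom (fun w => H.map (TypeCat.ofHom γ) (l.app L w))) z)) := by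
          rw [← FunctorToTypes.map_comp_apply]; rfl
  · -- finality
    intro C c hcu hcm ξC hξC
    obtain ⟨h, hh, hu⟩ := hfinal C ξC
    have halg : (fun z => h (c z)) = (fun z => γ (M.toFunctor.map (TypeCat.ofHom h) z)) := by
      apply uniq (M.toFunctor.obj C)
        (fun z => l.app C (M.toFunctor.map (TypeCat.ofHom ξC) z))
      · intro z
        calc ξ (h (c z)) = H.map (TypeCat.ofHom h) (ξC (c z)) := hh _
          _ = H.map (TypeCat.ofHom h) (H.map (TypeCat.ofHom c) (l.app C (M.toFunctor.map (TypeCat.ofHom ξC) z))) := by rw [hξC]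
          _ = H.map (TypeCat.ofHom (fun z => h (c z))) (l.app C (M.toFunctor.map (TypeCat.ofHom ξC) z)) := Hcomp _ _ _
      · intro z
        calc ξ (γ (M.toFunctor.map (TypeCat.ofHom h) z))
            = H.map (TypeCat.ofHom γ) (l.app L (M.toFunctor.map (TypeCat.ofHom ξ) (M.toFunctor.map (TypeCat.ofHom h) z))) := hγ _
          _ = H.map (TypeCat.ofHom γ) (l.app L (M.toFunctor.map (TypeCat.ofHom (fun w => ξ (h w))) z)) := by rw [Mcomp]
          _ = H.map (TypeCat.ofHom γ) (l.app L (M.toFunctor.map (TypeCat.ofHom (fun w => H.map (TypeCat.ofHom h) (ξC w))) z)) := by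
              rw [funext hh]
          _ = H.map (TypeCat.ofHom γ) (l.app L (M.toFunctor.map (H.map (TypeCat.ofHom h)) (M.toFunctor.map (TypeCat.ofHom ξC) z))) := by
              rw [← FunctorToTypes.map_comp_apply]; rfl
          _ = H.map (TypeCat.ofHom γ) (H.map (M.toFunctor.map (TypeCat.ofHom h)) (l.app C (M.toFunctor.map (TypeCat.ofHom ξC) z))) := by
              rw [l.naturality h]
          _ = H.map (TypeCat.ofHom (fun z => γ (M.toFunctor.map (TypeCat.ofHom h) z))) (l.app C (M.toFunctor.map (TypeCat.ofHom ξC) z)) :=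
              HcompH _ _ _
    refine ⟨h, ⟨fun z => congrFun halg z, hh⟩, ?_⟩
    intro g hg
    exact hu g hg.2

end OnCoalgebrasOverAlgebras
end

section
/- Let H : Set → Set admit a lifting to Alg(M) via a distributive law λ : MH → HM, and suppose M0 = 1 in Alg(M). Then in the terminal sequence 1 ⇄ H1 ⇄ H²1 ⇄ … every connecting map Hⁿt : H^{n+1}1 → Hⁿ1 is a split epimorphism of M-algebras with splitting Hⁿ! : Hⁿ1 → H^{n+1}1 satisfying Hⁿt ∘ Hⁿ! = id, where ! : 1 = M0 → HM0 = H1 is the unique algebra map out of the initial algebra. -/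
open CategoryTheory

universe u

namespace OnCoalgebrasOverAlgebras

section Aux

variable {M : Monad (Type u)} {H : Type u ⥤ Type u}

lemma mapc (F : Type u ⥤ Type u) {X Y Z : Type u} (f : X → Y) (g : Y → Z) (x : F.obj X) :
    F.map (TypeCat.ofHom (g ∘ f)) x = F.map (TypeCat.ofHom g) (F.map (TypeCat.ofHom f) x) := by
  rw [show TypeCat.ofHom (g ∘ f) = TypeCat.ofHom f ≫ TypeCat.ofHom g from rfl, F.map_comp]; rfl

lemma tmap_emb (e : TObj H 0 → TObj H 1) :
    ∀ n (x : TObj H n), TMap H n (Emb H e n x) = x := by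
  intro n
  induction n with
  | zero => intro x; cases x; rfl
  | succ n ih =>
    intro x
    show H.map (TypeCat.ofHom (TMap H n)) (H.map (TypeCat.ofHom (Emb H e n)) x) = x
    rw [← mapc H (Emb H e n) (TMap H n) x]
    have h : (TMap H n ∘ Emb H e n) = id := funext ih
    rw [h]
    exact FunctorToTypes.map_id_apply H x

lemma tmap_alg (l : DistLaw M H) :
    ∀ n (z : M.toFunctor.obj (TObj H (n + 1))),
      TMap H n (aStr l (n + 1) z) = aStr l n (M.toFunctor.map (TypeCat.ofHom (TMap H n)) z) := by
  intro n
  induction n with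
  | zero => intro z; rfl
  | succ n ih =>
    intro z
    show H.map (TypeCat.ofHom (TMap H n)) (H.map (TypeCat.ofHom (aStr l (n + 1))) (l.app (TObj H (n + 1)) z))
        = H.map (TypeCat.ofHom (aStr l n)) (l.app (TObj H n) (M.toFunctor.map (H.map (TypeCat.ofHom (TMap H n))) z))
    erw [l.naturality (TMap H n) z, ← mapc H (aStr l (n + 1)) (TMap H n),
      ← mapc H (M.toFunctor.map (TypeCat.ofHom (TMap H n))) (aStr l n)]
    have h : (TMap H n ∘ aStr l (n + 1))
        = (aStr l n ∘ M.toFunctor.map (TypeCat.ofHom (TMap H n))) := funext ih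
    rw [h]

lemma emb_alg (l : DistLaw M H) (e : TObj H 0 → TObj H 1)
    (he : ∀ z, e (aStr l 0 z) = aStr l 1 (M.toFunctor.map (TypeCat.ofHom e) z)) :
    ∀ n (z : M.toFunctor.obj (TObj H n)),
      Emb H e n (aStr l n z) = aStr l (n + 1) (M.toFunctor.map (TypeCat.ofHom (Emb H e n)) z) := by
  intro n
  induction n with
  | zero => exact he
  | succ n ih =>
    intro z
    show H.map (TypeCat.ofHom (Emb H e n)) (H.map (TypeCat.ofHom (aStr l n)) (l.app _ z))
        = H.map (TypeCat.ofHom (aStr l (n + 1))) (l.app _ (M.toFunctor.map (H.map (TypeCat.ofHom (Emb H e n))) z))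
    erw [l.naturality (Emb H e n) z, ← mapc H (aStr l n) (Emb H e n),
      ← mapc H (M.toFunctor.map (TypeCat.ofHom (Emb H e n))) (aStr l (n + 1))]
    have h : (Emb H e n ∘ aStr l n)
        = (aStr l (n + 1) ∘ M.toFunctor.map (TypeCat.ofHom (Emb H e n))) := funext ih
    rw [h]

/-- Each `aStr l n` is an `M`-algebra structure (associativity). -/
lemma aStr_assoc (l : DistLaw M H) :
    ∀ n (v : M.toFunctor.obj (M.toFunctor.obj (TObj H n))),
      aStr l n (M.μ.app _ v) = aStr l n (M.toFunctor.map (TypeCat.ofHom (aStr l n)) v) := by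
  intro n
  induction n with
  | zero => intro v; rfl
  | succ n ih =>
    intro v
    show H.map (TypeCat.ofHom (aStr l n)) (l.app _ (M.μ.app (H.obj (TObj H n)) v))
        = H.map (TypeCat.ofHom (aStr l n)) (l.app _ (M.toFunctor.map
            (TypeCat.ofHom (fun z => H.map (TypeCat.ofHom (aStr l n)) (l.app _ z))) v))
    erw [l.mul]
    have hsplit : (fun z => H.map (TypeCat.ofHom (aStr l n)) (l.app (TObj H n) z))
        = (fun z => H.map (TypeCat.ofHom (aStr l n)) z) ∘ l.app (TObj H n) := rfl
    erw [hsplit, mapc M.toFunctor (l.app (TObj H n)) (fun z => H.map (TypeCat.ofHom (aStr l n)) z)]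
    erw [l.naturality (aStr l n)]
    erw [← FunctorToTypes.map_comp_apply H (M.μ.app (TObj H n)) (TypeCat.ofHom (aStr l n)),
      ← mapc H (M.toFunctor.map (TypeCat.ofHom (aStr l n))) (aStr l n)]
    have h : (M.μ.app (TObj H n) ≫ TypeCat.ofHom (aStr l n))
        = TypeCat.ofHom (aStr l n ∘ M.toFunctor.map (TypeCat.ofHom (aStr l n))) :=
      ConcreteCategory.hom_ext _ _ fun v => ih v
    rw [h]

end Aux

/-- Let `H` admit a lifting to `Alg(M)` via a distributive law
`λ : MH → HM`, and suppose `M0 = 1` in `Alg(M)` (the free algebra on the empty set is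
a singleton).  Then there is a unique `M`-algebra map `! : 1 = M0 → HM0 = H1`, and in
the terminal sequence every connecting map `Hⁿt : H^{n+1}1 → Hⁿ1` is a split
epimorphism of `M`-algebras with splitting `Hⁿ!` satisfying `Hⁿt ∘ Hⁿ! = id`. -/
theorem terminal_sequence_split (M : Monad (Type u)) (H : Type u ⥤ Type u)
    (l : DistLaw M H)
    (h0 : Subsingleton (M.toFunctor.obj PEmpty))
    (h1 : Nonempty (M.toFunctor.obj PEmpty)) :
    -- the unique algebra map `! : 1 → H1`
    (∃! e : TObj H 0 → TObj H 1,
      ∀ z, e (aStr l 0 z) = aStr l 1 (M.toFunctor.map (TypeCat.ofHom e) z)) ∧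
    (∀ e : TObj H 0 → TObj H 1,
      (∀ z, e (aStr l 0 z) = aStr l 1 (M.toFunctor.map (TypeCat.ofHom e) z)) →
      ∀ n : ℕ,
        -- `Hⁿt ∘ Hⁿ! = id`, so `Hⁿt` is split epi with splitting `Hⁿ!`
        (∀ x : TObj H n, TMap H n (Emb H e n x) = x) ∧
        -- `Hⁿ!` is an `M`-algebra morphism
        (∀ z : M.toFunctor.obj (TObj H n),
          Emb H e n (aStr l n z) = aStr l (n + 1) (M.toFunctor.map (TypeCat.ofHom (Emb H e n)) z)) ∧
        -- `Hⁿt` is an `M`-algebra morphism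
        (∀ z : M.toFunctor.obj (TObj H (n + 1)),
          TMap H n (aStr l (n + 1) z) = aStr l n (M.toFunctor.map (TypeCat.ofHom (TMap H n)) z))) := by
  classical
  obtain ⟨w⟩ := h1
  let elim : PEmpty.{u + 1} → TObj H 1 := fun x => x.elim
  -- the canonical candidate for `!`
  let e₀ : TObj H 0 → TObj H 1 := fun _ => aStr l 1 (M.toFunctor.map (TypeCat.ofHom elim) w)
  -- every algebra morphism `1 → H1` has the canonical value
  have key : ∀ e : TObj H 0 → TObj H 1,
      (∀ z, e (aStr l 0 z) = aStr l 1 (M.toFunctor.map (TypeCat.ofHom e) z)) →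
      e PUnit.unit = aStr l 1 (M.toFunctor.map (TypeCat.ofHom elim) w) := by
    intro e he
    have h := he (M.toFunctor.map (TypeCat.ofHom (fun _ : PEmpty => PUnit.unit)) w)
    erw [← mapc M.toFunctor (fun _ : PEmpty => PUnit.unit) e w] at h
    have h2 : (e ∘ fun _ : PEmpty => PUnit.unit) = elim := by
      funext x; exact x.elim
    erw [h2] at h
    exact h
  -- the canonical candidate is an algebra morphism
  have he₀ : ∀ z, e₀ (aStr l 0 z) = aStr l 1 (M.toFunctor.map (TypeCat.ofHom e₀) z) := by
    intro z
    show aStr l 1 (M.toFunctor.map (TypeCat.ofHom elim) w) = aStr l 1 (M.toFunctor.map (TypeCat.ofHom e₀) z)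
    have hψ : M.toFunctor.map (TypeCat.ofHom (fun _ : M.toFunctor.obj PEmpty => PUnit.unit))
        (M.toFunctor.map (TypeCat.ofHom (fun _ : PUnit => w)) z) = z := by
      rw [← mapc M.toFunctor (fun _ : PUnit => w)
        (fun _ : M.toFunctor.obj PEmpty => PUnit.unit) z]
      have h : ((fun _ : M.toFunctor.obj PEmpty => PUnit.unit) ∘
          (fun _ : PUnit => w)) = id := by
        funext u; cases u; rfl
      rw [h]
      exact FunctorToTypes.map_id_apply M.toFunctor z
    set z' : M.toFunctor.obj (M.toFunctor.obj PEmpty) :=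
      M.toFunctor.map (TypeCat.ofHom (fun _ : PUnit => w)) z with hz'
    have step1 : M.toFunctor.map (TypeCat.ofHom e₀) z =
        M.toFunctor.map (TypeCat.ofHom (fun m => aStr l 1 (M.toFunctor.map (TypeCat.ofHom elim) m))) z' := by
      conv_lhs => rw [← hψ]
      erw [← mapc M.toFunctor (fun _ : M.toFunctor.obj PEmpty => PUnit.unit) e₀ z']
      exact congrArg (fun f => M.toFunctor.map (TypeCat.ofHom f) z') (funext fun m =>
        congrArg (fun x => aStr l 1 (M.toFunctor.map (TypeCat.ofHom elim) x))
          (Subsingleton.elim w m))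
    rw [step1]
    have step2 : (fun m : M.toFunctor.obj PEmpty =>
        aStr l 1 (M.toFunctor.map (TypeCat.ofHom elim) m)) = aStr l 1 ∘ M.toFunctor.map (TypeCat.ofHom elim) := rfl
    rw [step2, mapc M.toFunctor (M.toFunctor.map (TypeCat.ofHom elim)) (aStr l 1) z']
    rw [← aStr_assoc l 1 (M.toFunctor.map (TypeCat.ofHom (M.toFunctor.map (TypeCat.ofHom elim))) z')]
    have step3 : M.μ.app (TObj H 1) (M.toFunctor.map (TypeCat.ofHom (M.toFunctor.map (TypeCat.ofHom elim))) z')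
        = M.toFunctor.map (TypeCat.ofHom elim) (M.μ.app PEmpty z') :=
      congrArg (fun f => f z') (M.μ.naturality (TypeCat.ofHom elim))
    rw [step3, Subsingleton.elim (M.μ.app PEmpty z') w]
  refine ⟨⟨e₀, he₀, ?_⟩, ?_⟩
  · intro e he
    funext u
    cases u
    exact (key e he).trans (key e₀ he₀).symm
  · intro e he n
    exact ⟨tmap_emb e n, emb_alg l e he n, tmap_alg l n⟩

end OnCoalgebrasOverAlgebras
end
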